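/- arXiv:1910.13870 — 5 statements merged into one kernel-verified Lean document; each statement's English description precedes it below -/
import Mathlib

section
/- Let u : Ω → ℝ be convex. Then: (i) the extension ũ is convex on ℝ^d and ũ = u on Ω; (ii) for every x ∈ Ω one has ∂u(x) = χ_u(x); (iii) if in addition u is bounded on Ω and the set ∂u(Ω) is bounded in ℝ^d, then ũ is real-valued and continuous on all of ℝ^d; (iv) if u is the restriction to Ω of a function that is continuous on Ω̄ and convex on Ω̄, then ũ coincides with that function on Ω̄. -/
open Set MeasureTheory Filter Topology

noncomputable section

abbrev Euc (d : ℕ) := EuclideanSpace ℝ (Fin d)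

/-- Subdifferential of `v` at `x` relative to the set `C`. -/
def subdiff {d : ℕ} (C : Set (Euc d)) (v : Euc d → ℝ) (x : Euc d) : Set (Euc d) :=
  {p | ∀ y ∈ C, v x + (inner ℝ p (y - x) : ℝ) ≤ v y}

/-- `⋃ x ∈ S, subdiff C v x`. -/
def subdiffSet {d : ℕ} (C : Set (Euc d)) (v : Euc d → ℝ) (S : Set (Euc d)) : Set (Euc d) :=
  ⋃ x ∈ S, subdiff C v x

/-- The convex extension `ũ` of `u : Ω → ℝ` (may take the value `+∞`, hence `EReal`). -/
def extFun {d : ℕ} (Ω : Set (Euc d)) (u : Euc d → ℝ) (x : Euc d) : EReal :=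
  ⨆ y ∈ Ω, ⨆ q ∈ subdiff Ω u y, ((u y + (inner ℝ q (x - y) : ℝ) : ℝ) : EReal)

/-- `χ_u(x)`: the subdifferential of the extension `ũ` at `x`. -/
def chiSub {d : ℕ} (Ω : Set (Euc d)) (u : Euc d → ℝ) (x : Euc d) : Set (Euc d) :=
  {p | ∀ z : Euc d, extFun Ω u x + (((inner ℝ p (z - x) : ℝ) : ℝ) : EReal) ≤ extFun Ω u z}

def chiSubSet {d : ℕ} (Ω : Set (Euc d)) (u : Euc d → ℝ) (S : Set (Euc d)) : Set (Euc d) :=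
  ⋃ x ∈ S, chiSub Ω u x

/-- The lattice `hℤ^d`. -/
def latt (d : ℕ) (h : ℝ) : Set (Euc d) := {x | ∀ i, ∃ m : ℤ, x i = m * h}

/-- `Ω_h = Ω ∩ hℤ^d`. -/
def meshΩ {d : ℕ} (Ω : Set (Euc d)) (h : ℝ) : Set (Euc d) := Ω ∩ latt d h

/-- An integer direction `e ∈ ℤ^d` as a vector of `ℝ^d`. -/
def intVec {d : ℕ} (e : Fin d → ℤ) : Euc d :=
  (EuclideanSpace.equiv (Fin d) ℝ).symm (fun i => (e i : ℝ))

/-- `h^e_x = sup { r h : r ∈ [0,1], x + r h e ∈ closure Ω }`. -/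
def hev {d : ℕ} (Ω : Set (Euc d)) (h : ℝ) (x : Euc d) (e : Fin d → ℤ) : ℝ :=
  sSup {t | ∃ r ∈ Icc (0:ℝ) 1, t = r * h ∧ x + (r * h) • intVec e ∈ closure Ω}

/-- The boundary nodes `∂Ω_h` for the direction set `V`. -/
def meshBd {d : ℕ} (Ω : Set (Euc d)) (h : ℝ) (V : Set (Fin d → ℤ)) : Set (Euc d) :=
  {x ∈ frontier Ω | ∃ y ∈ meshΩ Ω h, ∃ e ∈ V, x = y + hev Ω h y e • intVec e}

/-- The convex envelope of `u` with constraints on `N`: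
`Γ(u)(x) = sup {L x : L affine, L ≤ u on N}`. -/
def convEnv {d : ℕ} (N : Set (Euc d)) (u : Euc d → ℝ) (x : Euc d) : ℝ :=
  sSup {t | ∃ (p : Euc d) (c : ℝ),
    (∀ y ∈ N, (inner ℝ p y : ℝ) + c ≤ u y) ∧ t = (inner ℝ p x : ℝ) + c}

/-- The second difference operator `Δ_e u_h (x)`. -/
def deltaE {d : ℕ} (Ω : Set (Euc d)) (h : ℝ) (u : Euc d → ℝ) (e : Fin d → ℤ)
    (x : Euc d) : ℝ :=
  2 / (hev Ω h x e + hev Ω h x (-e)) *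
    ((u (x + hev Ω h x e • intVec e) - u x) / hev Ω h x e +
     (u (x + hev Ω h x (-e) • intVec (-e)) - u x) / hev Ω h x (-e))

/-- Discrete convexity with the full set of directions `e ∈ ℤ^d \ {0}`. -/
def DiscConvex {d : ℕ} (Ω : Set (Euc d)) (h : ℝ) (u : Euc d → ℝ) : Prop :=
  ∀ x ∈ meshΩ Ω h, ∀ e : Fin d → ℤ, e ≠ 0 → 0 ≤ deltaE Ω h u e x



lemma subdiff_nonempty {d : ℕ} {Ω : Set (Euc d)} (hop : IsOpen Ω) (hcv : Convex ℝ Ω)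
    {u : Euc d → ℝ} (hu : ConvexOn ℝ Ω u) {x : Euc d} (hx : x ∈ Ω) :
    (subdiff Ω u x).Nonempty := by
  have ucont : ContinuousOn u Ω := hu.continuousOn hop
  set S : Set (Euc d × ℝ) := {p | p.1 ∈ Ω ∧ u p.1 < p.2} with hS
  have hSopen : IsOpen S := by
    rw [isOpen_iff_mem_nhds]
    rintro ⟨y, t⟩ ⟨hy, hyt⟩
    have hcy : ContinuousAt (fun p : Euc d × ℝ => p.2 - u p.1) (y, t) :=
      continuousAt_snd.sub ((ucont.continuousAt (hop.mem_nhds hy)).comp continuousAt_fst)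
    have h1 : ∀ᶠ p : Euc d × ℝ in 𝓝 (y, t), p.1 ∈ Ω :=
      (hop.preimage continuous_fst).mem_nhds hy
    have h2 : ∀ᶠ p : Euc d × ℝ in 𝓝 (y, t), p.2 - u p.1 ∈ Ioi (0:ℝ) :=
      hcy (Ioi_mem_nhds (by simpa using hyt))
    filter_upwards [h1, h2] with p hp1 hp2
    exact ⟨hp1, by simpa [sub_pos] using hp2⟩
  have hSconv : Convex ℝ S := by
    rintro ⟨y1, t1⟩ ⟨h1, h1'⟩ ⟨y2, t2⟩ ⟨h2, h2'⟩ a b ha hb hab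
    refine ⟨hcv h1 h2 ha hb hab, ?_⟩
    have hle := hu.2 h1 h2 ha hb hab
    have : a * u y1 + b * u y2 < a * t1 + b * t2 := by
      rcases eq_or_lt_of_le ha with rfl | ha'
      · have hb1 : b = 1 := by linarith
        simp [hb1]; linarith
      · exact add_lt_add_of_lt_of_le (by nlinarith) (mul_le_mul_of_nonneg_left h2'.le hb)
    calc u (a • y1 + b • y2) ≤ a * u y1 + b * u y2 := by simpa [smul_eq_mul] using hle
      _ < a * t1 + b * t2 := this
  have hxS : (x, u x) ∉ S := fun h => lt_irrefl _ h.2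
  obtain ⟨f, hf⟩ := geometric_hahn_banach_open_point hSconv hSopen hxS
  have hf_lin : ∀ (y : Euc d) (t : ℝ), f (y, t) = f (y, 0) + t * f (0, 1) := by
    intro y t
    have : ((y, t) : Euc d × ℝ) = (y, (0:ℝ)) + t • ((0 : Euc d), (1:ℝ)) := by
      simp [Prod.ext_iff]
    rw [this, map_add, ContinuousLinearMap.map_smul]; simp [smul_eq_mul]
  set c : ℝ := f (0, 1) with hcdef
  have hc : c < 0 := by
    have h1 : ((x, u x + 1) : Euc d × ℝ) ∈ S := ⟨hx, by show u x < u x + 1; linarith⟩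
    have := hf _ h1
    rw [hf_lin x (u x + 1), hf_lin x (u x)] at this
    linarith
  have key : ∀ y ∈ Ω, f (y, 0) + u y * c ≤ f (x, 0) + u x * c := by
    intro y hy
    by_contra hcon
    push_neg at hcon
    set δ : ℝ := (f (y, 0) + u y * c) - (f (x, 0) + u x * c) with hδdef
    have hδ : 0 < δ := by linarith
    set ε : ℝ := δ / (-2 * c) with hεdef
    have hε : 0 < ε := div_pos hδ (by linarith)
    have hmem : ((y, u y + ε) : Euc d × ℝ) ∈ S := ⟨hy, by show u y < u y + ε; linarith⟩
    have hlt := hf _ hmem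
    rw [hf_lin y (u y + ε), hf_lin x (u x)] at hlt
    have hεc : ε * c = -δ / 2 := by
      rw [hεdef]; field_simp
      rw [div_self (ne_of_lt hc)]
    nlinarith
  set L : Euc d →L[ℝ] ℝ := (1 / (-c)) • (f.comp (ContinuousLinearMap.inl ℝ (Euc d) ℝ)) with hLdef
  refine ⟨(InnerProductSpace.toDual ℝ (Euc d)).symm L, fun y hy => ?_⟩
  have hip : (inner ℝ ((InnerProductSpace.toDual ℝ (Euc d)).symm L) (y - x) : ℝ) = L (y - x) :=
    InnerProductSpace.toDual_symm_apply
  rw [hip]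
  have hLval : L (y - x) = (1 / (-c)) * (f (y, 0) - f (x, 0)) := by
    have : f ((y - x : Euc d), (0:ℝ)) = f (y, 0) - f (x, 0) := by
      have : ((y - x : Euc d), (0:ℝ)) = (y, (0:ℝ)) - (x, (0:ℝ)) := by simp [Prod.ext_iff]
      rw [this, map_sub]
    simp [hLdef, this]
  rw [hLval]
  have h2 : f (y, 0) - f (x, 0) ≤ (u x - u y) * c := by
    have := key y hy; nlinarith [key y hy]
  have h3 : (1 / (-c)) * (f (y, 0) - f (x, 0)) ≤ (1 / (-c)) * ((u x - u y) * c) :=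
    mul_le_mul_of_nonneg_left h2 (le_of_lt (div_pos one_pos (by linarith)))
  have h4 : (1 / (-c)) * ((u x - u y) * c) = u y - u x := by
    field_simp
    rw [mul_div_cancel_left₀ _ (ne_of_lt hc)]; ring
  linarith

section AuxLemmas

variable {d : ℕ} {Ω : Set (Euc d)} {u : Euc d → ℝ}

lemma le_extFun {y q : Euc d} (hy : y ∈ Ω) (hq : q ∈ subdiff Ω u y) (x : Euc d) :
    ((u y + (inner ℝ q (x - y) : ℝ) : ℝ) : EReal) ≤ extFun Ω u x :=
  le_iSup₂_of_le y hy (le_iSup₂_of_le q hq le_rfl)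

lemma extFun_le {x : Euc d} {c : EReal}
    (h : ∀ y ∈ Ω, ∀ q ∈ subdiff Ω u y, ((u y + (inner ℝ q (x - y) : ℝ) : ℝ) : EReal) ≤ c) :
    extFun Ω u x ≤ c :=
  iSup₂_le fun y hy => iSup₂_le fun q hq => h y hy q hq

lemma extFun_eq (hop : IsOpen Ω) (hcv : Convex ℝ Ω) (hu : ConvexOn ℝ Ω u) {x : Euc d}
    (hx : x ∈ Ω) : extFun Ω u x = ((u x : ℝ) : EReal) := by
  apply le_antisymm
  · exact extFun_le fun y hy q hq => EReal.coe_le_coe_iff.2 (hq x hx)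
  · obtain ⟨p, hp⟩ := subdiff_nonempty hop hcv hu hx
    have := le_extFun hx hp x
    simpa using this

lemma aux_mul {a t : ℝ} (ha : 0 ≤ a) {X : EReal} (h : (t : EReal) ≤ X) :
    ((a * t : ℝ) : EReal) ≤ (a : EReal) * X := by
  rcases eq_or_lt_of_le ha with rfl | ha'
  · simp [EReal.zero_mul]
  · induction X using EReal.rec with
    | bot => simp at h
    | coe r =>
        rw [← EReal.coe_mul]
        exact EReal.coe_le_coe_iff.2 (mul_le_mul_of_nonneg_left (EReal.coe_le_coe_iff.1 h) ha)
    | top =>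
        rw [EReal.mul_top_of_pos (by exact_mod_cast ha')]
        exact le_top

end AuxLemmas

/-- properties of the convex extension `ũ`:
(i) `ũ` is convex on `ℝ^d` and `ũ = u` on `Ω`;
(ii) `∂u(x) = χ_u(x)` for all `x ∈ Ω`;
(iii) if `u` is bounded on `Ω` and `∂u(Ω)` is bounded, then `ũ` is real-valued and
continuous on `ℝ^d`;
(iv) if `u` is the restriction to `Ω` of a function continuous and convex on `closure Ω`,
then `ũ` coincides with that function on `closure Ω`. -/
theorem statement0 {d : ℕ} (hd : 1 ≤ d) (Ω : Set (Euc d))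
    (hne : Ω.Nonempty) (hbd : Bornology.IsBounded Ω) (hop : IsOpen Ω) (hcv : Convex ℝ Ω)
    (u : Euc d → ℝ) (hu : ConvexOn ℝ Ω u) :
    ((∀ x y : Euc d, ∀ a b : ℝ, 0 ≤ a → 0 ≤ b → a + b = 1 →
        extFun Ω u (a • x + b • y) ≤ (a : EReal) * extFun Ω u x + (b : EReal) * extFun Ω u y) ∧
      (∀ x ∈ Ω, extFun Ω u x = ((u x : ℝ) : EReal))) ∧
    (∀ x ∈ Ω, subdiff Ω u x = chiSub Ω u x) ∧
    ((∃ M : ℝ, ∀ x ∈ Ω, |u x| ≤ M) → Bornology.IsBounded (subdiffSet Ω u Ω) →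
      ∃ v : Euc d → ℝ, Continuous v ∧ ∀ x : Euc d, extFun Ω u x = ((v x : ℝ) : EReal)) ∧
    (∀ g : Euc d → ℝ, ContinuousOn g (closure Ω) → ConvexOn ℝ (closure Ω) g →
      (∀ x ∈ Ω, u x = g x) → ∀ x ∈ closure Ω, extFun Ω u x = ((g x : ℝ) : EReal)) := by
  have h1b : ∀ x ∈ Ω, extFun Ω u x = ((u x : ℝ) : EReal) := fun x hx => extFun_eq hop hcv hu hx
  have h1a : ∀ x y : Euc d, ∀ a b : ℝ, 0 ≤ a → 0 ≤ b → a + b = 1 →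
      extFun Ω u (a • x + b • y) ≤ (a : EReal) * extFun Ω u x + (b : EReal) * extFun Ω u y := by
    intro x y a b ha hb hab
    apply extFun_le
    intro y0 hy0 q hq
    have hv : a • x + b • y - y0 = a • (x - y0) + b • (y - y0) := by
      have h0 : a • y0 + b • y0 = y0 := by rw [← add_smul, hab, one_smul]
      calc a • x + b • y - y0 = a • x + b • y - (a • y0 + b • y0) := by rw [h0]
        _ = a • (x - y0) + b • (y - y0) := by rw [smul_sub, smul_sub]; abel
    have hterm : u y0 + (inner ℝ q (a • x + b • y - y0) : ℝ)
        = a * (u y0 + (inner ℝ q (x - y0) : ℝ)) + b * (u y0 + (inner ℝ q (y - y0) : ℝ)) := by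
      rw [hv, inner_add_right, real_inner_smul_right, real_inner_smul_right]
      linear_combination (-(u y0)) * hab
    rw [show ((u y0 + (inner ℝ q (a • x + b • y - y0) : ℝ) : ℝ) : EReal)
        = ((a * (u y0 + (inner ℝ q (x - y0) : ℝ)) + b * (u y0 + (inner ℝ q (y - y0) : ℝ)) : ℝ) : EReal)
      from congrArg _ hterm, EReal.coe_add]
    exact add_le_add (aux_mul ha (le_extFun hy0 hq x)) (aux_mul hb (le_extFun hy0 hq y))
  have h2 : ∀ x ∈ Ω, subdiff Ω u x = chiSub Ω u x := by
    intro x hx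
    ext p
    constructor
    · intro hp z
      rw [h1b x hx]
      calc ((u x : ℝ) : EReal) + (((inner ℝ p (z - x) : ℝ) : ℝ) : EReal)
          = ((u x + (inner ℝ p (z - x) : ℝ) : ℝ) : EReal) := by rw [← EReal.coe_add]
        _ ≤ extFun Ω u z := le_extFun hx hp z
    · intro hp y hy
      have h := hp y
      rw [h1b x hx, h1b y hy, ← EReal.coe_add] at h
      exact_mod_cast h
  have h3 : (∃ M : ℝ, ∀ x ∈ Ω, |u x| ≤ M) → Bornology.IsBounded (subdiffSet Ω u Ω) →
      ∃ v : Euc d → ℝ, Continuous v ∧ ∀ x : Euc d, extFun Ω u x = ((v x : ℝ) : EReal) := by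
    rintro ⟨M, hM⟩ hbdd
    obtain ⟨K, hK⟩ := isBounded_iff_forall_norm_le.1 hbdd
    obtain ⟨R, hR⟩ := isBounded_iff_forall_norm_le.1 hbd
    obtain ⟨x₀, hx₀⟩ := hne
    obtain ⟨p₀, hp₀⟩ := subdiff_nonempty hop hcv hu hx₀
    have hmemS : ∀ y ∈ Ω, ∀ q ∈ subdiff Ω u y, q ∈ subdiffSet Ω u Ω := by
      intro y hy q hq
      exact Set.mem_biUnion hy hq
    have hKnn : 0 ≤ K := le_trans (norm_nonneg p₀) (hK p₀ (hmemS _ hx₀ _ hp₀))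
    have hbot : ∀ x : Euc d, extFun Ω u x ≠ ⊥ := by
      intro x h
      have hle := le_extFun hx₀ hp₀ x
      rw [h] at hle
      simp at hle
    have htop : ∀ x : Euc d, extFun Ω u x ≠ ⊤ := by
      intro x
      refine ne_top_of_le_ne_top (EReal.coe_ne_top (M + K * (‖x‖ + R))) (extFun_le ?_)
      intro y hy q hq
      refine EReal.coe_le_coe_iff.2 ?_
      have h1 : u y ≤ M := (abs_le.1 (hM y hy)).2
      have h2 : (inner ℝ q (x - y) : ℝ) ≤ K * (‖x‖ + R) :=
        calc (inner ℝ q (x - y) : ℝ) ≤ ‖q‖ * ‖x - y‖ := real_inner_le_norm q (x - y)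
          _ ≤ K * (‖x‖ + R) := mul_le_mul (hK q (hmemS y hy q hq))
              ((norm_sub_le x y).trans (by linarith [hR y hy])) (norm_nonneg _) hKnn
      linarith
    set v : Euc d → ℝ := fun x => (extFun Ω u x).toReal with hv
    have hve : ∀ x : Euc d, extFun Ω u x = ((v x : ℝ) : EReal) :=
      fun x => (EReal.coe_toReal (htop x) (hbot x)).symm
    have hlip : ∀ x x' : Euc d, v x ≤ v x' + K * ‖x - x'‖ := by
      intro x x'
      have hle : extFun Ω u x ≤ ((v x' + K * ‖x - x'‖ : ℝ) : EReal) := by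
        apply extFun_le
        intro y hy q hq
        refine EReal.coe_le_coe_iff.2 ?_
        have hA : u y + (inner ℝ q (x' - y) : ℝ) ≤ v x' := by
          have := le_extFun hy hq x'
          rw [hve x'] at this
          exact_mod_cast this
        have hB : (inner ℝ q (x - y) : ℝ) = (inner ℝ q (x' - y) : ℝ) + (inner ℝ q (x - x') : ℝ) := by
          rw [← inner_add_right]
          congr 1
          abel
        have hC : (inner ℝ q (x - x') : ℝ) ≤ K * ‖x - x'‖ :=
          (real_inner_le_norm q (x - x')).trans
            (mul_le_mul_of_nonneg_right (hK q (hmemS y hy q hq)) (norm_nonneg _))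
        linarith
      rw [hve x] at hle
      exact_mod_cast hle
    refine ⟨v, ?_, hve⟩
    have hlw : LipschitzWith (Real.toNNReal K) v := by
      apply LipschitzWith.of_dist_le_mul
      intro x x'
      rw [Real.coe_toNNReal K hKnn, Real.dist_eq, dist_eq_norm, abs_sub_le_iff]
      constructor
      · linarith [hlip x x']
      · have := hlip x' x
        rw [norm_sub_rev] at this
        linarith
    exact hlw.continuous
  refine ⟨⟨h1a, h1b⟩, h2, h3, ?_⟩
  intro g hg hgc hgu x hx
  apply le_antisymm
  · apply extFun_le
    intro y hy q hq
    refine EReal.coe_le_coe_iff.2 ?_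
    have hnb : (𝓝[Ω] x).NeBot := mem_closure_iff_nhdsWithin_neBot.1 hx
    have hA : Tendsto (fun z : Euc d => u y + (inner ℝ q (z - y) : ℝ)) (𝓝[Ω] x)
        (𝓝 (u y + (inner ℝ q (x - y) : ℝ))) := by
      apply Tendsto.mono_left _ nhdsWithin_le_nhds
      exact Continuous.tendsto
        (continuous_const.add ((continuous_const (y := q)).inner (continuous_id.sub continuous_const))) x
    have hgt : Tendsto g (𝓝[Ω] x) (𝓝 (g x)) :=
      (hg x hx).mono_left (nhdsWithin_mono x subset_closure)
    refine le_of_tendsto_of_tendsto hA hgt (eventually_of_mem self_mem_nhdsWithin fun z hz => ?_)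
    rw [← hgu z hz]
    exact hq z hz
  · obtain ⟨x₀, hx₀⟩ := hne
    set xt : ℝ → Euc d := fun t => x₀ + t • (x - x₀) with hxt
    have hmem : ∀ t ∈ Ioo (0:ℝ) 1, xt t ∈ Ω := by
      intro t ht
      have h := hcv.combo_interior_closure_mem_interior
        (by rwa [hop.interior_eq] : x₀ ∈ interior Ω) hx
        (by linarith [ht.2] : (0:ℝ) < 1 - t) ht.1.le (by ring)
      rw [hop.interior_eq] at h
      have hx2 : xt t = (1 - t) • x₀ + t • x := by simp only [hxt]; module
      rw [hx2]; exact h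
    have hl : (𝓝[Ioo (0:ℝ) 1] (1:ℝ)).NeBot := by
      apply mem_closure_iff_nhdsWithin_neBot.1
      rw [closure_Ioo (by norm_num : (0:ℝ) ≠ 1)]
      exact ⟨zero_le_one, le_refl 1⟩
    have hφle : ∀ t ∈ Ioo (0:ℝ) 1,
        ((u (xt t) + ((1 - t) / t) * (u (xt t) - u x₀) : ℝ) : EReal) ≤ extFun Ω u x := by
      intro t ht
      obtain ⟨q, hq⟩ := subdiff_nonempty hop hcv hu (hmem t ht)
      refine le_trans ?_ (le_extFun (hmem t ht) hq x)
      refine EReal.coe_le_coe_iff.2 ?_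
      have ht0 : t ≠ 0 := ne_of_gt ht.1
      have h2 : x - xt t = ((1 - t) / t) • (xt t - x₀) := by
        have hA : xt t - x₀ = t • (x - x₀) := by simp only [hxt]; module
        rw [hA, smul_smul, div_mul_cancel₀ _ ht0]
        simp only [hxt]; module
      have h3 : (inner ℝ q (x - xt t) : ℝ) = ((1 - t) / t) * (inner ℝ q (xt t - x₀) : ℝ) := by
        rw [h2, real_inner_smul_right]
      have h4 : u (xt t) - u x₀ ≤ (inner ℝ q (xt t - x₀) : ℝ) := by
        have h5 := hq x₀ hx₀
        have h6 : (inner ℝ q (x₀ - xt t) : ℝ) = -(inner ℝ q (xt t - x₀) : ℝ) := by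
          rw [← inner_neg_right, neg_sub]
        linarith
      have h5 : 0 ≤ (1 - t) / t := div_nonneg (by linarith [ht.2]) ht.1.le
      have h7 := mul_le_mul_of_nonneg_left h4 h5
      rw [h3]
      linarith
    have hxtc : Tendsto xt (𝓝[Ioo (0:ℝ) 1] 1) (𝓝[closure Ω] x) := by
      apply tendsto_nhdsWithin_of_tendsto_nhds_of_eventually_within
      · have hc : Continuous xt := continuous_const.add (continuous_id.smul continuous_const)
        have h1 : xt 1 = x := by simp [hxt]
        exact h1 ▸ (hc.tendsto 1).mono_left nhdsWithin_le_nhds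
      · exact eventually_of_mem self_mem_nhdsWithin fun t ht => subset_closure (hmem t ht)
    have hgt : Tendsto (fun t => g (xt t)) (𝓝[Ioo (0:ℝ) 1] 1) (𝓝 (g x)) :=
      Filter.Tendsto.comp (hg x hx) hxtc
    have hut : Tendsto (fun t => u (xt t)) (𝓝[Ioo (0:ℝ) 1] 1) (𝓝 (g x)) :=
      Tendsto.congr' (eventually_of_mem self_mem_nhdsWithin
        fun t ht => (hgu (xt t) (hmem t ht)).symm) hgt
    have hcoef : Tendsto (fun t : ℝ => (1 - t) / t) (𝓝[Ioo (0:ℝ) 1] 1) (𝓝 0) := by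
      have h := ((tendsto_const_nhds (x := (1:ℝ))).sub tendsto_id).div tendsto_id one_ne_zero
      convert h.mono_left nhdsWithin_le_nhds using 2 <;> norm_num
    have hφt : Tendsto (fun t => ((u (xt t) + ((1 - t) / t) * (u (xt t) - u x₀) : ℝ) : EReal))
        (𝓝[Ioo (0:ℝ) 1] 1) (𝓝 ((g x : ℝ) : EReal)) := by
      apply (continuous_coe_real_ereal.tendsto _).comp
      have h := hut.add (hcoef.mul (hut.sub (tendsto_const_nhds (x := u x₀))))
      simpa using h
    exact le_of_tendsto hφt (eventually_of_mem self_mem_nhdsWithin fun t ht => hφle t ht)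

end
end

section
/- Let g : ℝ^d → ℝ be a convex function and let u_h be a mesh function with u_h(x) = g(x) for all x ∈ ∂Ω_h. Then the convex envelope satisfies Γ(u_h)(x) = u_h(x) for every x ∈ ∂Ω_h. -/
open Set MeasureTheory Filter Topology

noncomputable section

lemma coord_abs_le_norm {d : ℕ} (y : Euc d) (i : Fin d) : |y i| ≤ ‖y‖ := by
  rw [EuclideanSpace.norm_eq]
  have h1 : |y i| = Real.sqrt (‖y i‖ ^ 2) := by
    rw [Real.sqrt_sq_eq_abs, Real.norm_eq_abs, abs_abs]
  rw [h1]
  apply Real.sqrt_le_sqrt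
  exact Finset.single_le_sum (f := fun j => ‖y j‖ ^ 2) (fun j _ => by positivity)
    (Finset.mem_univ i)

lemma exists_subgrad {d : ℕ} (g : Euc d → ℝ) (hg : ConvexOn ℝ Set.univ g) (x : Euc d) :
    ∃ q : Euc d, ∀ y : Euc d, g x + (inner ℝ q (y - x) : ℝ) ≤ g y := by
  have hcont : Continuous g := by
    rw [← continuousOn_univ]
    exact hg.continuousOn isOpen_univ
  set S : Set (Euc d × ℝ) := {z | g z.1 < z.2} with hS
  have hopen : IsOpen S := isOpen_lt (hcont.comp continuous_fst) continuous_snd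
  have hconv : Convex ℝ S := by
    intro z hz w hw a b ha hb hab
    simp only [hS, mem_setOf_eq] at hz hw ⊢
    have h2 := hg.2 (mem_univ z.1) (mem_univ w.1) ha hb hab
    have : a • g z.1 + b • g w.1 < a • z.2 + b • w.2 := by
      rcases eq_or_lt_of_le ha with rfl | ha'
      · simp only [zero_smul, zero_add] at hab ⊢
        rw [hab] at *
        simpa using hw
      · have h3 : a • g z.1 < a • z.2 := by
          simp only [smul_eq_mul]; exact mul_lt_mul_of_pos_left hz ha'
        have h4 : b • g w.1 ≤ b • w.2 := by
          simp only [smul_eq_mul]; exact mul_le_mul_of_nonneg_left hw.le hb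
        linarith
    calc g ((a • z + b • w).1) = g (a • z.1 + b • w.1) := rfl
      _ ≤ a • g z.1 + b • g w.1 := h2
      _ < a • z.2 + b • w.2 := this
      _ = (a • z + b • w).2 := rfl
  have hxS : (x, g x) ∉ S := by simp [hS]
  obtain ⟨f, hf⟩ := geometric_hahn_banach_open_point hconv hopen hxS
  set c : ℝ := f (0, 1) with hc
  have hsplit : ∀ (y : Euc d) (t : ℝ), f (y, t) = f (y, 0) + t * c := by
    intro y t
    have : (y, t) = (y, (0:ℝ)) + t • ((0 : Euc d), (1:ℝ)) := by
      simp [Prod.ext_iff]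
    rw [this, map_add, f.map_smul]
    simp [hc, smul_eq_mul]
  have hcneg : c < 0 := by
    have h1 := hf (x, g x + 1) (by simp [hS])
    rw [hsplit x (g x + 1), hsplit x (g x)] at h1
    linarith
  have hkey : ∀ y : Euc d, f (y, 0) + g y * c ≤ f (x, 0) + g x * c := by
    intro y
    have : ∀ ε > 0, f (y, 0) + g y * c < f (x, 0) + g x * c + ε := by
      intro ε hε
      have ht : (0:ℝ) < ε / (-c) := div_pos hε (by linarith)
      have h1 := hf (y, g y + ε / (-c)) (by simp [hS, ht])
      rw [hsplit y _, hsplit x _] at h1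
      have hmc : (-c) ≠ 0 := by linarith
      have hdc : ε / (-c) * c = -ε := by
        field_simp
        rw [div_self (show c ≠ 0 by linarith)]
      nlinarith [hdc]
    linarith [le_of_forall_pos_lt_add this]
  set f₁ : Euc d →L[ℝ] ℝ := f.comp (ContinuousLinearMap.inl ℝ (Euc d) ℝ) with hf₁
  have hf₁app : ∀ z : Euc d, f₁ z = f (z, 0) := by
    intro z
    simp [hf₁]
  set v : Euc d := (InnerProductSpace.toDual ℝ (Euc d)).symm f₁ with hv
  have hvz : ∀ z : Euc d, (inner ℝ v z : ℝ) = f (z, 0) := by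
    intro z
    rw [hv, InnerProductSpace.toDual_symm_apply]
    exact hf₁app z
  refine ⟨(-c)⁻¹ • v, fun y => ?_⟩
  have h1 := hkey y
  have h2 : (inner ℝ ((-c)⁻¹ • v) (y - x) : ℝ) = (-c)⁻¹ * (f (y,0) - f (x,0)) := by
    rw [real_inner_smul_left, inner_sub_right, hvz, hvz]
  rw [h2]
  have hcpos : 0 < -c := by linarith
  have h3 : f (y, 0) - f (x, 0) ≤ (g x - g y) * c := by linarith
  have h4 : (-c)⁻¹ * (f (y,0) - f (x,0)) ≤ (-c)⁻¹ * ((g x - g y) * c) :=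
    mul_le_mul_of_nonneg_left h3 (by positivity)
  have h5 : (-c)⁻¹ * ((g x - g y) * c) = g y - g x := by
    rw [inv_neg, neg_mul, ← mul_assoc, mul_comm c⁻¹, mul_assoc, inv_mul_cancel₀ (show c ≠ 0 by linarith)]
    ring
  linarith


lemma meshFin {d : ℕ} (Ω : Set (Euc d)) (hbd : Bornology.IsBounded Ω) (h : ℝ) (hh : 0 < h) :
    (meshΩ Ω h).Finite := by
  obtain ⟨R, hR⟩ := hbd.subset_closedBall 0
  set ψ : Euc d → (Fin d → ℤ) := fun y i => round (y i / h) with hψ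
  have hrec : ∀ y ∈ meshΩ Ω h, ∀ i, (ψ y i : ℝ) * h = y i := by
    intro y hy i
    obtain ⟨m, hm⟩ := hy.2 i
    have hdiv : y i / h = (m : ℝ) := by rw [hm, mul_div_assoc, div_self hh.ne', mul_one]
    show (round (y i / h) : ℝ) * h = y i
    rw [hdiv, round_intCast, ← hm]
  have hinj : Set.InjOn ψ (meshΩ Ω h) := by
    intro y1 h1 y2 h2 heq
    ext i
    have e1 := hrec y1 h1 i
    have e2 := hrec y2 h2 i
    rw [heq] at e1
    rw [← e1, ← e2]
  set K : ℤ := ⌈R / h⌉ with hK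
  have himg : ψ '' (meshΩ Ω h) ⊆ Set.pi Set.univ (fun _ : Fin d => Set.Icc (-K) K) := by
    rintro m ⟨y, hy, rfl⟩
    intro i _
    have hrc := hrec y hy i
    have hnorm : ‖y‖ ≤ R := by
      have := hR hy.1
      simpa [Metric.mem_closedBall] using this
    have habs : |(ψ y i : ℝ)| * h ≤ R := by
      have h1 : |y i| ≤ R := (coord_abs_le_norm y i).trans hnorm
      calc |(ψ y i : ℝ)| * h = |(ψ y i : ℝ) * h| := by
            rw [abs_mul, abs_of_pos hh]
        _ = |y i| := by rw [hrc]
        _ ≤ R := h1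
    have hle : |(ψ y i : ℝ)| ≤ R / h := by
      rw [le_div_iff₀ hh]; exact habs
    have hle2 : |ψ y i| ≤ K := by
      have h2 : |((ψ y i : ℤ) : ℝ)| ≤ (K : ℝ) := hle.trans (Int.le_ceil _)
      exact_mod_cast h2
    simp only [Set.mem_Icc]
    constructor
    · linarith [neg_abs_le (ψ y i), abs_le.mp hle2]
    · exact (le_abs_self _).trans hle2
  have hfin : (ψ '' (meshΩ Ω h)).Finite :=
    Set.Finite.subset (Set.Finite.pi fun _ => Set.finite_Icc _ _) himg
  exact Set.Finite.of_finite_image hfin hinj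


/-- if `u_h = g` on `∂Ω_h` for a convex function `g : ℝ^d → ℝ`, then the convex
envelope satisfies `Γ(u_h) = u_h` on `∂Ω_h`. -/
theorem statement2 {d : ℕ} (hd : 1 ≤ d) (Ω : Set (Euc d))
    (hne : Ω.Nonempty) (hbd : Bornology.IsBounded Ω) (hop : IsOpen Ω) (hcv : Convex ℝ Ω)
    (h : ℝ) (hh : 0 < h)
    (V : Set (Fin d → ℤ)) (hV0 : (0 : Fin d → ℤ) ∉ V)
    (hVbasis : ∀ i : Fin d, Pi.single i 1 ∈ V)
    (hVsym : ∀ e ∈ V, -e ∈ V)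
    (g : Euc d → ℝ) (hg : ConvexOn ℝ Set.univ g)
    (u : Euc d → ℝ) (hbc : ∀ x ∈ meshBd Ω h V, u x = g x) :
    ∀ x ∈ meshBd Ω h V, convEnv (meshΩ Ω h ∪ meshBd Ω h V) u x = u x := by
  intro x hx
  have hxfr : x ∈ frontier Ω := hx.1
  have hxg : u x = g x := hbc x hx
  have hxΩ : x ∉ Ω := by
    rw [hop.frontier_eq] at hxfr
    exact hxfr.2
  obtain ⟨fp, hfp⟩ := geometric_hahn_banach_open_point hcv hop hxΩ
  have hclos : ∀ y ∈ closure Ω, fp y ≤ fp x := by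
    intro y hy
    exact closure_minimal (fun z hz => (hfp z hz).le)
      (isClosed_le fp.continuous continuous_const) hy
  set p : Euc d := (InnerProductSpace.toDual ℝ (Euc d)).symm fp with hp
  have hpz : ∀ z : Euc d, (inner ℝ p z : ℝ) = fp z := by
    intro z
    rw [hp, InnerProductSpace.toDual_symm_apply]
  obtain ⟨q, hq⟩ := exists_subgrad g hg x
  have hfin := meshFin Ω hbd h hh
  set F : Euc d → ℝ := fun y => (g x + (inner ℝ q (y - x) : ℝ) - u y) / (fp x - fp y) with hF
  obtain ⟨M0, hM0⟩ := (hfin.image F).bddAbove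
  have hMnn : (0:ℝ) ≤ max M0 0 := le_max_right _ _
  have hmem : u x ∈ {t | ∃ (p' : Euc d) (c : ℝ),
      (∀ y ∈ meshΩ Ω h ∪ meshBd Ω h V, (inner ℝ p' y : ℝ) + c ≤ u y) ∧
      t = (inner ℝ p' x : ℝ) + c} := by
    refine ⟨q + (max M0 0) • p, g x - (inner ℝ q x : ℝ) - (max M0 0) * fp x, ?_, ?_⟩
    · intro y hy
      rw [inner_add_left, real_inner_smul_left, hpz]
      have hqs : (inner ℝ q (y - x) : ℝ) = (inner ℝ q y : ℝ) - (inner ℝ q x : ℝ) :=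
        inner_sub_right q y x
      rcases hy with hy | hy
      · have hlt : fp y < fp x := hfp y hy.1
        have hpos : 0 < fp x - fp y := by linarith
        have hFy : F y ≤ max M0 0 :=
          le_trans (hM0 (Set.mem_image_of_mem F hy)) (le_max_left _ _)
        have hdiv : g x + (inner ℝ q (y - x) : ℝ) - u y ≤ (max M0 0) * (fp x - fp y) := by
          have := (div_le_iff₀ hpos).mp hFy
          linarith [this]
        have hexp : (max M0 0) * (fp x - fp y)
            = (max M0 0) * fp x - (max M0 0) * fp y := by ring
        linarith [hdiv, hqs]
      · have hyg : u y = g y := hbc y hy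
        have hle : fp y ≤ fp x := hclos y (frontier_subset_closure hy.1)
        have hnn : 0 ≤ (max M0 0) * (fp x - fp y) :=
          mul_nonneg hMnn (by linarith)
        have hgy := hq y
        nlinarith [hgy, hqs, hnn]
    · rw [inner_add_left, real_inner_smul_left, hpz, hxg]
      ring
  have hub : ∀ t ∈ {t | ∃ (p' : Euc d) (c : ℝ),
      (∀ y ∈ meshΩ Ω h ∪ meshBd Ω h V, (inner ℝ p' y : ℝ) + c ≤ u y) ∧
      t = (inner ℝ p' x : ℝ) + c}, t ≤ u x := by
    rintro t ⟨p', c, hle, rfl⟩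
    exact hle x (Or.inr hx)
  exact le_antisymm (csSup_le ⟨u x, hmem⟩ hub) (le_csSup ⟨u x, hub⟩ hmem)


end
end

section
/- Let u_h be a mesh function and let x ∈ Ω_h satisfy Γ(u_h)(x) = u_h(x). Then ∂Γ(u_h)(x) = ∂_h u_h(x). -/
open Set MeasureTheory Filter Topology

noncomputable section

/-- The mesh `Ω_h` is a finite set. -/
lemma meshΩ_finite' {d : ℕ} (Ω : Set (Euc d)) (h : ℝ) (hh : 0 < h)
    (hbd : Bornology.IsBounded Ω) : (meshΩ Ω h).Finite := by
  obtain ⟨R, hR⟩ := hbd.subset_closedBall 0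
  set M : ℤ := ⌈R / h⌉ with hM
  have hfin : (Set.pi (Set.univ : Set (Fin d)) (fun _ => Set.Icc (-M) M)).Finite :=
    Set.Finite.pi (fun _ => Set.finite_Icc _ _)
  set g : (Fin d → ℤ) → Euc d :=
    fun m => (EuclideanSpace.equiv (Fin d) ℝ).symm (fun i => (m i : ℝ) * h) with hg
  apply Set.Finite.subset (hfin.image g)
  rintro x ⟨hxΩ, hlat⟩
  choose m hm using hlat
  refine ⟨m, ?_, ?_⟩
  · intro i _
    have hx : |x i| ≤ ‖x‖ := by
      rw [EuclideanSpace.norm_eq]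
      calc |x i| = Real.sqrt (|x i|^2) := by rw [Real.sqrt_sq_eq_abs, abs_abs]
        _ ≤ _ := Real.sqrt_le_sqrt <|
          Finset.single_le_sum (f := fun j => |x j|^2) (fun j _ => by positivity)
            (Finset.mem_univ i)
    have hxR : ‖x‖ ≤ R := by
      simpa [Metric.mem_closedBall, dist_eq_norm] using hR hxΩ
    have h1 : (|m i| : ℝ) * h ≤ R := by
      rw [← abs_of_pos hh, ← abs_mul]
      calc |(m i : ℝ) * h| = |x i| := by rw [hm i]
        _ ≤ R := hx.trans hxR
    have h2 : (|m i| : ℝ) ≤ R / h := (le_div_iff₀ hh).2 h1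
    have h3 : (|m i| : ℝ) ≤ (M : ℝ) := h2.trans (by rw [hM]; exact_mod_cast Int.le_ceil _)
    have h4 : |m i| ≤ M := by exact_mod_cast h3
    exact abs_le.1 h4
  · rw [hg]
    ext i
    exact (hm i).symm

/-- if `x ∈ Ω_h` and `Γ(u_h)(x) = u_h(x)`, then `∂Γ(u_h)(x) = ∂_h u_h(x)`. -/
theorem statement5 {d : ℕ} (hd : 1 ≤ d) (Ω : Set (Euc d))
    (hne : Ω.Nonempty) (hbd : Bornology.IsBounded Ω) (hop : IsOpen Ω) (hcv : Convex ℝ Ω)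
    (h : ℝ) (hh : 0 < h)
    (B : Set (Euc d)) (hBfin : B.Finite) (hBbd : B ⊆ frontier Ω)
    (u : Euc d → ℝ)
    (x : Euc d) (hx : x ∈ meshΩ Ω h)
    (heq : convEnv (meshΩ Ω h ∪ B) u x = u x) :
    subdiff (convexHull ℝ (meshΩ Ω h ∪ B)) (convEnv (meshΩ Ω h ∪ B) u) x =
      subdiff (meshΩ Ω h ∪ B) u x := by
  set N : Set (Euc d) := meshΩ Ω h ∪ B with hN
  have hNfin : N.Finite := (meshΩ_finite' Ω h hh hbd).union hBfin
  have hxN : x ∈ N := Or.inl hx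
  set F : Finset (Euc d) := hNfin.toFinset with hF
  have hFne : F.Nonempty := ⟨x, by simp [hF, hNfin.mem_toFinset, hxN]⟩
  have hmemF : ∀ y ∈ N, y ∈ F := fun y hy => by simp [hF, hNfin.mem_toFinset, hy]
  set S : Euc d → Set ℝ := fun z => {t | ∃ (p : Euc d) (c : ℝ),
    (∀ y ∈ N, (inner ℝ p y : ℝ) + c ≤ u y) ∧ t = (inner ℝ p z : ℝ) + c} with hS
  have hconv : ∀ z, convEnv N u z = sSup (S z) := fun z => rfl
  -- nonemptiness of the admissible set
  have hSne : ∀ z, (S z).Nonempty := by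
    intro z
    refine ⟨(inner ℝ (0 : Euc d) z : ℝ) + F.inf' hFne u, 0, F.inf' hFne u, ?_, rfl⟩
    intro y hy
    have : F.inf' hFne u ≤ u y := Finset.inf'_le u (hmemF y hy)
    simpa [inner_zero_left] using this
  -- boundedness above on the convex hull
  have hbdd : ∀ z ∈ convexHull ℝ N, BddAbove (S z) := by
    intro z hz
    refine ⟨F.sup' hFne u, ?_⟩
    rintro t ⟨q, c, hqc, rfl⟩
    have hsub : convexHull ℝ N ⊆ {w : Euc d | (inner ℝ q w : ℝ) + c ≤ F.sup' hFne u} := by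
      apply convexHull_min
      · intro y hy
        exact (hqc y hy).trans (Finset.le_sup' u (hmemF y hy))
      · intro a ha b hb s t hs ht hst
        have ha' : (inner ℝ q a : ℝ) + c ≤ F.sup' hFne u := ha
        have hb' : (inner ℝ q b : ℝ) + c ≤ F.sup' hFne u := hb
        have : (inner ℝ q (s • a + t • b) : ℝ) = s * (inner ℝ q a : ℝ) + t * (inner ℝ q b : ℝ) := by
          rw [inner_add_right, real_inner_smul_right, real_inner_smul_right]
        simp only [Set.mem_setOf_eq, this]
        have h1 := mul_le_mul_of_nonneg_left ha' hs
        have h2 := mul_le_mul_of_nonneg_left hb' ht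
        have e1 : s * c + t * c = c := by rw [← add_mul, hst, one_mul]
        have e2 : s * (F.sup' hFne u) + t * (F.sup' hFne u) = F.sup' hFne u := by
          rw [← add_mul, hst, one_mul]
        linarith [h1, h2, e1, e2]
    exact hsub hz
  -- Γ ≤ u on N
  have hΓle : ∀ y ∈ N, convEnv N u y ≤ u y := by
    intro y hy
    rw [hconv]
    apply csSup_le (hSne y)
    rintro t ⟨q, c, hqc, rfl⟩
    exact hqc y hy
  -- lower bound of Γ by admissible affine functions
  have hle : ∀ t ∈ S x, ∀ z ∈ convexHull ℝ N, True := fun _ _ _ _ => trivial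
  ext p
  constructor
  · -- ⊆ direction
    intro hp y hy
    have hyhull : y ∈ convexHull ℝ N := subset_convexHull ℝ N hy
    have := hp y hyhull
    rw [heq] at this
    exact this.trans (hΓle y hy)
  · -- ⊇ direction
    intro hp z hz
    rw [heq]
    have hmem : u x + (inner ℝ p (z - x) : ℝ) ∈ S z := by
      refine ⟨p, u x - (inner ℝ p x : ℝ), ?_, by rw [inner_sub_right]; ring⟩
      intro y hy
      have := hp y hy
      rw [inner_sub_right] at this
      linarith
    have := le_csSup (hbdd z hz) hmem
    rw [hconv]
    exact this

end
end

section
/- Let u_h be a mesh function and let x ∈ Ω_h satisfy Γ(u_h)(x) ≠ u_h(x). Then ∂_h u_h(x) = ∅, and for every p ∈ ∂Γ(u_h)(x) there exists y ∈ N_h with y ≠ x such that u_h(y) = Γ(u_h)(y) and p ∈ ∂Γ(u_h)(x) ∩ ∂Γ(u_h)(y). -/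
open Set MeasureTheory Filter Topology

noncomputable section

lemma meshFinite {d : ℕ} {Ω : Set (Euc d)} (hbd : Bornology.IsBounded Ω) {h : ℝ} (hh : 0 < h) :
    (meshΩ Ω h).Finite := by
  obtain ⟨R, hR⟩ := hbd.subset_closedBall 0
  set M : ℤ := ⌈R / h⌉ with hM
  have hfin : (Set.pi Set.univ (fun _ : Fin d => Set.Icc (-M) M)).Finite :=
    Set.Finite.pi (fun _ => Set.finite_Icc _ _)
  apply (hfin.image (fun m : Fin d → ℤ =>
      ((EuclideanSpace.equiv (Fin d) ℝ).symm (fun i => (m i : ℝ) * h)))).subset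
  rintro x ⟨hxΩ, hxl⟩
  choose m hm using hxl
  have hx' : ‖x‖ ≤ R := by simpa using hR hxΩ
  refine ⟨m, ?_, ?_⟩
  · intro i _
    have hxi : |x i| ≤ ‖x‖ := by
      rw [EuclideanSpace.norm_eq, ← Real.sqrt_sq_eq_abs]
      apply Real.sqrt_le_sqrt
      have : |x i| ^ 2 ≤ ∑ j, ‖x j‖ ^ 2 := by
        have := Finset.single_le_sum (f := fun j => ‖x j‖ ^ 2)
          (fun j _ => by positivity) (Finset.mem_univ i)
        simpa [Real.norm_eq_abs] using this
      simpa [sq_abs] using this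
    have h1 : |(m i : ℝ)| * h ≤ R := by
      have := hm i
      calc |(m i : ℝ)| * h = |x i| := by rw [this, abs_mul, abs_of_pos hh]
        _ ≤ R := hxi.trans hx'
    have h2 : |(m i : ℝ)| ≤ (M : ℝ) := ((le_div_iff₀ hh).mpr h1).trans (Int.le_ceil _)
    have h3 : |m i| ≤ M := by rw [← Int.cast_abs] at h2; exact_mod_cast h2
    simpa [Set.mem_Icc] using abs_le.mp h3
  · apply PiLp.ext
    intro i
    exact (hm i).symm

theorem statement6' {d : ℕ} (Ω : Set (Euc d))
    (hbd : Bornology.IsBounded Ω)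
    (h : ℝ) (hh : 0 < h)
    (B : Set (Euc d)) (hBfin : B.Finite)
    (u : Euc d → ℝ)
    (x : Euc d) (hx : x ∈ meshΩ Ω h)
    (hne' : convEnv (meshΩ Ω h ∪ B) u x ≠ u x) :
    subdiff (meshΩ Ω h ∪ B) u x = ∅ ∧
    ∀ p ∈ subdiff (convexHull ℝ (meshΩ Ω h ∪ B)) (convEnv (meshΩ Ω h ∪ B) u) x,
      ∃ y ∈ meshΩ Ω h ∪ B, y ≠ x ∧
        u y = convEnv (meshΩ Ω h ∪ B) u y ∧
        p ∈ subdiff (convexHull ℝ (meshΩ Ω h ∪ B)) (convEnv (meshΩ Ω h ∪ B) u) x ∩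
            subdiff (convexHull ℝ (meshΩ Ω h ∪ B)) (convEnv (meshΩ Ω h ∪ B) u) y := by
  set N : Set (Euc d) := meshΩ Ω h ∪ B with hN
  have hNfin : N.Finite := (meshFinite hbd hh).union hBfin
  have hxN : x ∈ N := Or.inl hx
  set S : Euc d → Set ℝ := fun z => {t | ∃ (p : Euc d) (c : ℝ),
    (∀ y ∈ N, (inner ℝ p y : ℝ) + c ≤ u y) ∧ t = (inner ℝ p z : ℝ) + c} with hS
  have hEnv : ∀ z, convEnv N u z = sSup (S z) := fun z => rfl
  have hub : ∀ z ∈ N, ∀ t ∈ S z, t ≤ u z := by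
    rintro z hz t ⟨p, c, hpc, rfl⟩
    exact hpc z hz
  obtain ⟨c0, hc0⟩ : ∃ c0 : ℝ, ∀ y ∈ N, c0 ≤ u y := by
    obtain ⟨c0, hc0⟩ := (hNfin.image u).bddBelow
    exact ⟨c0, fun y hy => hc0 (Set.mem_image_of_mem u hy)⟩
  have hSne : ∀ z, (S z).Nonempty := by
    intro z
    exact ⟨c0, 0, c0, fun y hy => by simpa using hc0 y hy, by simp⟩
  have hSbdd : ∀ z ∈ N, BddAbove (S z) := fun z hz => ⟨u z, hub z hz⟩
  have hΓle : ∀ z ∈ N, convEnv N u z ≤ u z := fun z hz => csSup_le (hSne z) (hub z hz)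
  have hmemΓ : ∀ z ∈ N, ∀ t ∈ S z, t ≤ convEnv N u z :=
    fun z hz t ht => le_csSup (hSbdd z hz) ht
  constructor
  · rw [Set.eq_empty_iff_forall_notMem]
    intro p hp
    apply hne'
    have h1 : u x ∈ S x := by
      refine ⟨p, u x - (inner ℝ p x : ℝ), fun y hy => ?_, by ring⟩
      have := hp y hy
      rw [inner_sub_right] at this
      linarith
    have h2 : u x ≤ convEnv N u x := hmemΓ x hxN _ h1
    exact le_antisymm (hΓle x hxN) h2
  · intro p hp
    set Γ := convEnv N u with hΓ
    set cL : ℝ := Γ x - (inner ℝ p x : ℝ) with hcL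
    have hLval : ∀ z : Euc d, (inner ℝ p z : ℝ) + cL = Γ x + (inner ℝ p (z - x) : ℝ) := by
      intro z; rw [inner_sub_right]; ring
    have hLmin : ∀ y ∈ N, (inner ℝ p y : ℝ) + cL ≤ u y := by
      intro y hy
      rw [hLval]
      exact (hp y (subset_convexHull ℝ N hy)).trans (hΓle y hy)
    have hcontact : ∃ y ∈ N, u y ≤ (inner ℝ p y : ℝ) + cL := by
      by_contra hno
      push_neg at hno
      have hT : hNfin.toFinset.Nonempty := by
        rw [Set.Finite.toFinset_nonempty]; exact ⟨x, hxN⟩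
      set ε : ℝ := hNfin.toFinset.inf' hT (fun y => u y - ((inner ℝ p y : ℝ) + cL)) with hε
      have hεpos : 0 < ε := by
        rw [hε, Finset.lt_inf'_iff]
        intro y hy
        have hyN' : y ∈ N := hNfin.mem_toFinset.mp hy
        have := hno y hyN'
        linarith
      have hmem : (inner ℝ p x : ℝ) + (cL + ε) ∈ S x := by
        refine ⟨p, cL + ε, fun y hy => ?_, rfl⟩
        have h4 : ε ≤ u y - ((inner ℝ p y : ℝ) + cL) :=
          Finset.inf'_le _ (hNfin.mem_toFinset.mpr hy)
        linarith
      have h5 := hmemΓ x hxN _ hmem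
      have h6 : (inner ℝ p x : ℝ) + cL = Γ x := by rw [hcL]; ring
      linarith
    obtain ⟨y, hyN, hyu⟩ := hcontact
    have hLy : (inner ℝ p y : ℝ) + cL ≤ u y := hLmin y hyN
    have hueq : u y = (inner ℝ p y : ℝ) + cL := le_antisymm hyu hLy
    have hΓy : Γ y = (inner ℝ p y : ℝ) + cL := by
      have h7 : (inner ℝ p y : ℝ) + cL ≤ Γ y := hmemΓ y hyN _ ⟨p, cL, hLmin, rfl⟩
      have h8 : Γ y ≤ u y := hΓle y hyN
      rw [hueq] at h8
      exact le_antisymm h8 h7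
    have hyx : y ≠ x := by
      intro he
      apply hne'
      rw [he] at hueq
      have h6 : (inner ℝ p x : ℝ) + cL = Γ x := by rw [hcL]; ring
      rw [hueq, h6]
    refine ⟨y, hyN, hyx, by rw [hueq, hΓy], hp, ?_⟩
    intro z hz
    have h9 := hp z hz
    have h10 : (inner ℝ p (z - y) : ℝ) = (inner ℝ p (z - x) : ℝ) - (inner ℝ p y : ℝ) + (inner ℝ p x : ℝ) := by
      rw [inner_sub_right, inner_sub_right]; ring
    rw [hΓy, h10, hcL]
    linarith

/-- if `x ∈ Ω_h` and `Γ(u_h)(x) ≠ u_h(x)`, then `∂_h u_h(x) = ∅` and each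
`p ∈ ∂Γ(u_h)(x)` also lies in `∂Γ(u_h)(y)` for some node `y ≠ x` with `u_h(y) = Γ(u_h)(y)`. -/
theorem statement6 {d : ℕ} (hd : 1 ≤ d) (Ω : Set (Euc d))
    (hne : Ω.Nonempty) (hbd : Bornology.IsBounded Ω) (hop : IsOpen Ω) (hcv : Convex ℝ Ω)
    (h : ℝ) (hh : 0 < h)
    (B : Set (Euc d)) (hBfin : B.Finite) (hBbd : B ⊆ frontier Ω)
    (u : Euc d → ℝ)
    (x : Euc d) (hx : x ∈ meshΩ Ω h)
    (hne' : convEnv (meshΩ Ω h ∪ B) u x ≠ u x) :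
    subdiff (meshΩ Ω h ∪ B) u x = ∅ ∧
    ∀ p ∈ subdiff (convexHull ℝ (meshΩ Ω h ∪ B)) (convEnv (meshΩ Ω h ∪ B) u) x,
      ∃ y ∈ meshΩ Ω h ∪ B, y ≠ x ∧
        u y = convEnv (meshΩ Ω h ∪ B) u y ∧
        p ∈ subdiff (convexHull ℝ (meshΩ Ω h ∪ B)) (convEnv (meshΩ Ω h ∪ B) u) x ∩
            subdiff (convexHull ℝ (meshΩ Ω h ∪ B)) (convEnv (meshΩ Ω h ∪ B) u) y :=
  statement6' Ω hbd h hh B hBfin u x hx hne'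

end
end

section
/- Let u : Ω̄ → ℝ be bounded and convex on Ω̄, and let (u_h)_{h>0} be a family of mesh functions converging to u uniformly on Ω̄. Then the convex envelopes Γ(u_h) converge to u uniformly on compact subsets of Ω: for every compact K ⊂ Ω there is h₀ > 0 such that K ⊆ conv(N_h) for all 0 < h < h₀, and sup_{x∈K} |Γ(u_h)(x) − u(x)| → 0 as h → 0. -/
open Set MeasureTheory Filter Topology

noncomputable section

private lemma norm_le_coords {d : ℕ} (v : Euc d) (a : ℝ) (ha : 0 ≤ a)
    (hv : ∀ i, |v i| ≤ a) : ‖v‖ ≤ Real.sqrt d * a := by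
  rw [EuclideanSpace.norm_eq]
  have h1 : ∑ i, ‖v i‖ ^ 2 ≤ (d : ℝ) * a ^ 2 := by
    have h2 : ∀ i ∈ Finset.univ, ‖v i‖ ^ 2 ≤ a ^ 2 := by
      intro i _
      have h3 : ‖v i‖ ≤ a := by rw [Real.norm_eq_abs]; exact hv i
      exact pow_le_pow_left₀ (norm_nonneg _) h3 2
    calc ∑ i, ‖v i‖ ^ 2 ≤ ∑ _i : Fin d, a ^ 2 := Finset.sum_le_sum h2
      _ = (d : ℝ) * a ^ 2 := by simp [Finset.sum_const, nsmul_eq_mul]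
  calc Real.sqrt (∑ i, ‖v i‖ ^ 2) ≤ Real.sqrt ((d : ℝ) * a ^ 2) := Real.sqrt_le_sqrt h1
    _ = Real.sqrt d * a := by
        rw [Real.sqrt_mul (Nat.cast_nonneg d), Real.sqrt_sq ha]

private lemma lattice_near {d : ℕ} {h : ℝ} (hh : 0 < h) (z : Euc d) :
    ∃ y : Euc d, y ∈ latt d h ∧ ‖y - z‖ ≤ Real.sqrt d * h := by
  refine ⟨(EuclideanSpace.equiv (Fin d) ℝ).symm (fun i => (round (z i / h) : ℝ) * h), ?_, ?_⟩
  · intro i; exact ⟨round (z i / h), rfl⟩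
  · refine norm_le_coords _ h hh.le fun i => ?_
    have hcoord : ((EuclideanSpace.equiv (Fin d) ℝ).symm (fun i => (round (z i / h) : ℝ) * h) - z) i
        = (round (z i / h) : ℝ) * h - z i := rfl
    rw [hcoord]
    have h2 : |(z i / h) - round (z i / h)| ≤ 1 / 2 := abs_sub_round (z i / h)
    have h3 : (round (z i / h) : ℝ) * h - z i = ((round (z i / h) : ℝ) - z i / h) * h := by
      field_simp
    rw [h3, abs_mul, abs_of_pos hh, abs_sub_comm]
    nlinarith [abs_nonneg ((z i / h) - round (z i / h))]

private lemma exists_lower_affine {d : ℕ} {Ω : Set (Euc d)} (hop : IsOpen Ω)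
    {u : Euc d → ℝ} (hucv : ConvexOn ℝ (closure Ω) u) {x : Euc d} (hx : x ∈ Ω)
    {η : ℝ} (hη : 0 < η) :
    ∃ p : Euc d, ∀ y ∈ closure Ω, u x - η + (inner ℝ p (y - x) : ℝ) ≤ u y := by
  have hxcl : x ∈ closure Ω := subset_closure hx
  have hxint : x ∈ interior (closure Ω) :=
    interior_mono subset_closure (by rwa [hop.interior_eq])
  have hcont : ContinuousAt u x :=
    hucv.continuousOn_interior.continuousAt (isOpen_interior.mem_nhds hxint)
  rw [Metric.continuousAt_iff] at hcont
  obtain ⟨ν, hν, hν'⟩ := hcont (η / 2) (by positivity)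
  set S : Set (Euc d × ℝ) := {q | q.1 ∈ closure Ω ∧ u q.1 ≤ q.2} with hSdef
  have hScv : Convex ℝ S := hucv.convex_epigraph
  have hq₀ : (x, u x - η) ∉ closure S := by
    intro hmem
    rw [mem_closure_iff] at hmem
    obtain ⟨q, hqU, hqS⟩ := hmem (Metric.ball x ν ×ˢ Iio (u x - η / 2))
      (Metric.isOpen_ball.prod isOpen_Iio)
      ⟨Metric.mem_ball_self hν, by simp; linarith⟩
    obtain ⟨hq1, hq2⟩ := hqU
    have h1 : |u q.1 - u x| < η / 2 := by
      have := hν' (show dist q.1 x < ν from hq1)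
      rwa [Real.dist_eq] at this
    have h2 : u q.1 ≤ q.2 := hqS.2
    have h3 : q.2 < u x - η / 2 := hq2
    have := abs_lt.mp h1
    linarith
  obtain ⟨f, cc, hfS, hfq⟩ :=
    geometric_hahn_banach_closed_point hScv.closure isClosed_closure hq₀
  set a : ℝ := f (0, 1) with hadef
  have hdec : ∀ (y : Euc d) (t : ℝ), f (y, t) = f (y, 0) + t * a := by
    intro y t
    have h1 : (y, t) = (y, (0 : ℝ)) + t • ((0 : Euc d), (1 : ℝ)) := by
      simp [Prod.ext_iff]
    rw [h1, map_add, _root_.map_smul, smul_eq_mul, hadef]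
  have hfq' : cc < f (x, 0) + (u x - η) * a := by rw [← hdec]; exact hfq
  have hepi : ∀ y ∈ closure Ω, ∀ t, u y ≤ t → f (y, 0) + t * a < cc := by
    intro y hy t ht
    have := hfS (y, t) (subset_closure ⟨hy, ht⟩)
    rwa [hdec] at this
  have ha : a < 0 := by
    rcases lt_trichotomy a 0 with ha | ha | ha
    · exact ha
    · exfalso
      have h1 := hepi x hxcl (u x) le_rfl
      rw [ha] at h1 hfq'
      simp at h1 hfq'
      linarith
    · exfalso
      have h2 : (cc - f (x, 0)) / a ≤ max (u x) ((cc - f (x, 0)) / a) := le_max_right _ _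
      have h1 := hepi x hxcl (max (u x) ((cc - f (x, 0)) / a)) (le_max_left _ _)
      rw [div_le_iff₀ ha] at h2
      nlinarith
  set glin : Euc d →L[ℝ] ℝ := f.comp (ContinuousLinearMap.inl ℝ (Euc d) ℝ) with hgdef
  have hg : ∀ y : Euc d, glin y = f (y, 0) := by
    intro y
    simp [hgdef]
  set p₀ : Euc d := (InnerProductSpace.toDual ℝ (Euc d)).symm glin with hp₀def
  have hp₀ : ∀ y : Euc d, (inner ℝ p₀ y : ℝ) = f (y, 0) := by
    intro y
    rw [hp₀def, InnerProductSpace.toDual_symm_apply, hg]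
  refine ⟨(-a)⁻¹ • p₀, ?_⟩
  intro y hy
  have h1 : f (y, 0) + u y * a < cc := hepi y hy (u y) le_rfl
  have h3 : (inner ℝ ((-a)⁻¹ • p₀) (y - x) : ℝ) = (f (y, 0) - f (x, 0)) / (-a) := by
    rw [real_inner_smul_left, inner_sub_right, hp₀, hp₀]
    ring
  rw [h3]
  have hA0 : (0 : ℝ) < -a := by linarith
  have h5 : f (y, 0) - f (x, 0) ≤ (u y - u x + η) * (-a) := by nlinarith
  have h6 : (f (y, 0) - f (x, 0)) / (-a) ≤ u y - u x + η := by
    rw [div_le_iff₀ hA0]; linarith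
  linarith


/-- if mesh functions `u_h` converge uniformly on `closure Ω` to a bounded
function `u` convex on `closure Ω`, then the convex envelopes `Γ(u_h)` converge to `u`
uniformly on compact subsets of `Ω` (and each compact `K ⊆ Ω` lies in `conv N_h` for small
`h`). -/
theorem statement9 {d : ℕ} (hd : 1 ≤ d) (Ω : Set (Euc d))
    (hne : Ω.Nonempty) (hbd : Bornology.IsBounded Ω) (hop : IsOpen Ω) (hcv : Convex ℝ Ω)
    (B : ℝ → Set (Euc d)) (hB : ∀ h : ℝ, 0 < h → (B h).Finite ∧ B h ⊆ frontier Ω)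
    (u : Euc d → ℝ) (hub : ∃ M : ℝ, ∀ x ∈ closure Ω, |u x| ≤ M)
    (hucv : ConvexOn ℝ (closure Ω) u)
    (uh : ℝ → Euc d → ℝ)
    (hcvg : ∀ ε : ℝ, 0 < ε → ∃ h₀ : ℝ, 0 < h₀ ∧ ∀ h : ℝ, 0 < h → h < h₀ →
      ∀ x ∈ meshΩ Ω h ∪ B h, |uh h x - u x| < ε) :
    ∀ K : Set (Euc d), IsCompact K → K ⊆ Ω →
      (∃ h₀ : ℝ, 0 < h₀ ∧ ∀ h : ℝ, 0 < h → h < h₀ →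
        K ⊆ convexHull ℝ (meshΩ Ω h ∪ B h)) ∧
      (∀ ε : ℝ, 0 < ε → ∃ h₁ : ℝ, 0 < h₁ ∧ ∀ h : ℝ, 0 < h → h < h₁ →
        ∀ x ∈ K, |convEnv (meshΩ Ω h ∪ B h) (uh h) x - u x| < ε) := by
  obtain ⟨M, hM⟩ := hub
  obtain ⟨x₀, hx₀⟩ := hne
  have hM0 : 0 ≤ M := le_trans (abs_nonneg _) (hM x₀ (subset_closure hx₀))
  intro K hK hKΩ
  obtain ⟨r₀, hr₀, hr₀sub⟩ := hK.exists_thickening_subset_open hop hKΩ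
  set r := r₀ / 2 with hrdef
  have hr : 0 < r := by positivity
  have hrsub : Metric.cthickening r K ⊆ Ω :=
    (Metric.cthickening_subset_thickening' hr₀ (by rw [hrdef]; linarith) K).trans hr₀sub
  have hsd : 0 ≤ Real.sqrt d := Real.sqrt_nonneg _
  -- a node close to any point near K
  have hnode : ∀ h : ℝ, 0 < h → Real.sqrt d * h ≤ r / 2 →
      ∀ z : Euc d, (∃ x ∈ K, ‖z - x‖ ≤ r / 2) →
      ∃ y ∈ meshΩ Ω h, ‖y - z‖ ≤ Real.sqrt d * h := by
    intro h hh hsh z hz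
    obtain ⟨x, hxK, hzx⟩ := hz
    obtain ⟨y, hyl, hyz⟩ := lattice_near hh z
    refine ⟨y, ⟨hrsub ?_, hyl⟩, hyz⟩
    refine Metric.mem_cthickening_of_dist_le y x r K hxK ?_
    calc dist y x ≤ dist y z + dist z x := dist_triangle y z x
      _ = ‖y - z‖ + ‖z - x‖ := by rw [dist_eq_norm, dist_eq_norm]
      _ ≤ r / 2 + r / 2 := add_le_add (le_trans hyz hsh) hzx
      _ = r := by ring
  -- each point of K is in the hull of mesh points, for small h
  have hhull : ∀ h : ℝ, 0 < h → Real.sqrt d * h ≤ r →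
      ∀ x ∈ K, x ∈ convexHull ℝ (meshΩ Ω h ∪ B h) := by
    intro h hh hsh x hxK
    set e := EuclideanSpace.equiv (Fin d) ℝ with hedef
    have hlin : IsLinearMap ℝ (⇑e.symm) := ⟨fun a b => map_add _ a b, fun c a => map_smul e.symm c a⟩
    set a : Fin d → ℝ := fun i => h * ⌊x i / h⌋ with hadef
    set t : Fin d → Set ℝ := fun i => {a i, a i + h} with htdef
    have hxi : ∀ i, x i ∈ Icc (a i) (a i + h) := by
      intro i
      constructor
      · calc a i = h * ⌊x i / h⌋ := rfl
          _ ≤ h * (x i / h) := mul_le_mul_of_nonneg_left (Int.floor_le _) hh.le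
          _ = x i := by field_simp
      · have h2 : x i / h < ⌊x i / h⌋ + 1 := Int.lt_floor_add_one _
        have h3 : x i = h * (x i / h) := by field_simp
        have h4 : a i = h * ⌊x i / h⌋ := rfl
        nlinarith
    have h1 : (fun i => x i) ∈ convexHull ℝ (Set.univ.pi t) := by
      apply mem_convexHull_pi
      intro i _
      show x i ∈ convexHull ℝ {a i, a i + h}
      rw [convexHull_pair, segment_eq_Icc (by linarith [(hxi i).1, (hxi i).2])]
      exact hxi i
    have h2 : x ∈ convexHull ℝ (⇑e.symm '' Set.univ.pi t) := by
      rw [← hlin.image_convexHull]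
      exact ⟨fun i => x i, h1, rfl⟩
    have hsubset : ⇑e.symm '' Set.univ.pi t ⊆ meshΩ Ω h ∪ B h := by
      rintro _ ⟨v, hv, rfl⟩
      have hvi : ∀ i, v i ∈ ({a i, a i + h} : Set ℝ) := fun i => hv i trivial
      have hcoord : ∀ i, |(e.symm v - x) i| ≤ h := by
        intro i
        have hei : (e.symm v - x) i = v i - x i := rfl
        rw [hei]
        obtain ⟨hx1, hx2⟩ := hxi i
        rcases hvi i with h' | h' <;> rw [h'] <;>
          exact abs_le.mpr ⟨by linarith, by linarith⟩
      left
      constructor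
      · apply hrsub
        apply Metric.mem_cthickening_of_dist_le _ x r K hxK
        rw [dist_eq_norm]
        exact le_trans (norm_le_coords _ h hh.le hcoord) hsh
      · intro i
        have hei : (e.symm v) i = v i := rfl
        rcases hvi i with h' | h'
        · exact ⟨⌊x i / h⌋, by rw [hei, h']; simp only [hadef]; ring⟩
        · refine ⟨⌊x i / h⌋ + 1, ?_⟩
          rw [hei, h']
          simp only [hadef]
          push_cast
          ring
    exact convexHull_mono hsubset h2
  constructor
  · refine ⟨r / (Real.sqrt d + 1), by positivity, ?_⟩
    intro h hh hlt x hx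
    refine hhull h hh ?_ x hx
    have h2 : h * (Real.sqrt d + 1) < r := (lt_div_iff₀ (by positivity)).mp hlt
    nlinarith
  · intro ε hε
    set δ := min (ε / 4) 1 with hδdef
    have hδ : 0 < δ := by positivity
    have hδ1 : δ ≤ 1 := min_le_right _ _
    have hδε : δ ≤ ε / 4 := min_le_left _ _
    obtain ⟨h₀, hh₀, hcv0⟩ := hcvg δ hδ
    have hScomp : IsCompact (Metric.cthickening r K) := hK.cthickening
    have hucont : ContinuousOn u Ω := by
      refine hucv.continuousOn_interior.mono ?_
      calc Ω = interior Ω := hop.interior_eq.symm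
        _ ⊆ interior (closure Ω) := interior_mono subset_closure
    have hucS : UniformContinuousOn u (Metric.cthickening r K) :=
      hScomp.uniformContinuousOn_of_continuous (hucont.mono hrsub)
    rw [Metric.uniformContinuousOn_iff] at hucS
    obtain ⟨δ₁, hδ₁, hmod⟩ := hucS (ε / 4) (by positivity)
    set P := (8 * M + 4) / r with hPdef
    have hP : 0 < P := by positivity
    set c₀ := min δ₁ (min (r / 4) ((ε / 4) / P)) with hc₀def
    have hc₀ : 0 < c₀ := by positivity
    refine ⟨min h₀ (c₀ / (Real.sqrt d + 1)), by positivity, ?_⟩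
    intro h hh hlt x hxK
    have hxΩ : x ∈ Ω := hKΩ hxK
    have hxcl : x ∈ closure Ω := subset_closure hxΩ
    have hux := abs_le.mp (hM x hxcl)
    have hhh₀ : h < h₀ := lt_of_lt_of_le hlt (min_le_left _ _)
    set s := Real.sqrt d * h with hsdef
    have hs0 : 0 ≤ s := by positivity
    have hs_lt : s < c₀ := by
      have h1 : h < c₀ / (Real.sqrt d + 1) := lt_of_lt_of_le hlt (min_le_right _ _)
      have h2 : h * (Real.sqrt d + 1) < c₀ := (lt_div_iff₀ (by positivity)).mp h1
      nlinarith
    have hs_δ₁ : s < δ₁ := lt_of_lt_of_le hs_lt (min_le_left _ _)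
    have hs_r4 : s < r / 4 :=
      lt_of_lt_of_le hs_lt (le_trans (min_le_right _ _) (min_le_left _ _))
    have hs_P : P * s < ε / 4 := by
      have h1 : s < (ε / 4) / P :=
        lt_of_lt_of_le hs_lt (le_trans (min_le_right _ _) (min_le_right _ _))
      calc P * s = s * P := by ring
        _ < ε / 4 := (lt_div_iff₀ hP).mp h1
    have hsr2 : s ≤ r / 2 := by linarith
    have huhnode : ∀ y ∈ meshΩ Ω h ∪ B h, |uh h y - u y| < δ := hcv0 h hh hhh₀
    have hnodecl : ∀ y ∈ meshΩ Ω h ∪ B h, y ∈ closure Ω := by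
      intro y hy
      rcases hy with hy | hy
      · exact subset_closure hy.1
      · exact frontier_subset_closure ((hB h hh).2 hy)
    set T := {t | ∃ (p : Euc d) (c : ℝ),
        (∀ y ∈ meshΩ Ω h ∪ B h, (inner ℝ p y : ℝ) + c ≤ uh h y) ∧
        t = (inner ℝ p x : ℝ) + c} with hTdef
    have hTeq : convEnv (meshΩ Ω h ∪ B h) (uh h) x = sSup T := rfl
    have hTne : T.Nonempty := by
      refine ⟨(inner ℝ (0 : Euc d) x : ℝ) + (-M - 1), 0, -M - 1, ?_, rfl⟩
      intro y hy
      have h1 := abs_le.mp (hM y (hnodecl y hy))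
      have h2 := abs_lt.mp (huhnode y hy)
      have h4 : (inner ℝ (0 : Euc d) y : ℝ) = 0 := inner_zero_left y
      rw [h4]
      linarith
    have hub' : ∀ t ∈ T, t ≤ u x + 3 * (ε / 4) := by
      rintro t ⟨p, c, hL, rfl⟩
      obtain ⟨y₀, hy₀m, hy₀n⟩ := hnode h hh hsr2 x ⟨x, hxK, by simp; linarith⟩
      have hxS : x ∈ Metric.cthickening r K := Metric.self_subset_cthickening K hxK
      have hy₀S : y₀ ∈ Metric.cthickening r K := by
        refine Metric.mem_cthickening_of_dist_le y₀ x r K hxK ?_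
        rw [dist_eq_norm]; linarith
      have hy₀u : |u y₀ - u x| < ε / 4 := by
        have h1 : dist y₀ x < δ₁ := by
          rw [dist_eq_norm]; exact lt_of_le_of_lt hy₀n hs_δ₁
        have := hmod y₀ hy₀S x hxS h1
        rwa [Real.dist_eq] at this
      have hL₀ : (inner ℝ p y₀ : ℝ) + c ≤ uh h y₀ := hL y₀ (Or.inl hy₀m)
      have huh₀ := abs_lt.mp (huhnode y₀ (Or.inl hy₀m))
      have hinx : (inner ℝ p x : ℝ) = (inner ℝ p y₀ : ℝ) + (inner ℝ p (x - y₀) : ℝ) := by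
        rw [inner_sub_right]; ring
      have hipb : (inner ℝ p (x - y₀) : ℝ) ≤ ‖p‖ * s := by
        calc (inner ℝ p (x - y₀) : ℝ) ≤ ‖p‖ * ‖x - y₀‖ := real_inner_le_norm _ _
          _ ≤ ‖p‖ * s := by
              have h1 : ‖x - y₀‖ ≤ s := by rw [norm_sub_rev]; exact hy₀n
              exact mul_le_mul_of_nonneg_left h1 (norm_nonneg _)
      have hy₀u' := abs_lt.mp hy₀u
      by_cases hcase : ‖p‖ ≤ P
      · have h1 : ‖p‖ * s ≤ P * s := mul_le_mul_of_nonneg_right hcase hs0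
        linarith
      · push_neg at hcase
        have hpn : 0 < ‖p‖ := lt_trans hP hcase
        have hrp : 8 * M + 4 ≤ ‖p‖ * r := by
          rw [hPdef] at hcase
          have := (div_le_iff₀ hr).mp hcase.le
          linarith
        set zpt := x + (r / 2) • (‖p‖⁻¹ • p) with hzdef
        have hzx : ‖zpt - x‖ ≤ r / 2 := by
          rw [hzdef, add_sub_cancel_left, norm_smul, norm_smul, norm_inv, norm_norm]
          rw [Real.norm_eq_abs, abs_of_pos (by positivity : (0:ℝ) < r / 2)]
          rw [inv_mul_cancel₀ (ne_of_gt hpn)]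
          linarith
        obtain ⟨y₁, hy₁m, hy₁n⟩ := hnode h hh hsr2 zpt ⟨x, hxK, hzx⟩
        have hL₁ : (inner ℝ p y₁ : ℝ) + c ≤ uh h y₁ := hL y₁ (Or.inl hy₁m)
        have huh₁ := abs_lt.mp (huhnode y₁ (Or.inl hy₁m))
        have hu₁ := abs_le.mp (hM y₁ (subset_closure hy₁m.1))
        have hip1 : (inner ℝ p (zpt - x) : ℝ) = (r / 2) * ‖p‖ := by
          rw [hzdef, add_sub_cancel_left, real_inner_smul_right, real_inner_smul_right,
            real_inner_self_eq_norm_sq]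
          field_simp
        have hip2 : -(‖p‖ * s) ≤ (inner ℝ p (y₁ - zpt) : ℝ) := by
          have h1 : |(inner ℝ p (y₁ - zpt) : ℝ)| ≤ ‖p‖ * ‖y₁ - zpt‖ := abs_real_inner_le_norm _ _
          have h2 : ‖p‖ * ‖y₁ - zpt‖ ≤ ‖p‖ * s :=
            mul_le_mul_of_nonneg_left hy₁n (norm_nonneg _)
          have := abs_le.mp (le_trans h1 h2)
          linarith [this.1]
        have hkey : (inner ℝ p y₁ : ℝ) =
            (inner ℝ p x : ℝ) + (inner ℝ p (zpt - x) : ℝ) + (inner ℝ p (y₁ - zpt) : ℝ) := by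
          simp only [inner_sub_right]
          ring
        have hps : ‖p‖ * s ≤ ‖p‖ * (r / 4) :=
          mul_le_mul_of_nonneg_left hs_r4.le (norm_nonneg _)
        -- (inner ℝ p x) + c ≤ u y₁ + δ - (r/4)‖p‖ ≤ M + 1 - (2M+1) = -M
        linarith [hL₁, huh₁.2, hu₁.2, hip1, hip2, hkey, hps, hrp, hux.1, hδ1, hε.le]
    have hbdd : BddAbove T := ⟨u x + 3 * (ε / 4), fun t ht => hub' t ht⟩
    obtain ⟨p, hp⟩ := exists_lower_affine hop hucv hxΩ (show (0:ℝ) < ε / 4 by positivity)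
    have hmem : u x - ε / 4 - δ ∈ T := by
      refine ⟨p, u x - ε / 4 - (inner ℝ p x : ℝ) - δ, ?_, by ring⟩
      intro y hy
      have h1 := hp y (hnodecl y hy)
      have h2 := abs_lt.mp (huhnode y hy)
      have h3 : (inner ℝ p (y - x) : ℝ) = (inner ℝ p y : ℝ) - (inner ℝ p x : ℝ) := by
        rw [inner_sub_right]
      linarith
    rw [hTeq]
    have hΓle : sSup T ≤ u x + 3 * (ε / 4) := csSup_le hTne hub'
    have hΓge : u x - ε / 4 - δ ≤ sSup T := le_csSup hbdd hmem
    rw [abs_lt]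
    constructor <;> [linarith; linarith]

end
end
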